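/- For indices i ∈ {1,…,D} and j ∈ {1,…,R}, the real function f(t) = ℓ evaluated with the entry V_{ij} of V replaced by t (keeping all other entries of A, V, μ, ν fixed) is differentiable at t = V_{ij} and its derivative equals (Σ·V)_{ij} − ((ν + D)/(ν + q))·r_i·(Vᵀ·r)_j, where Σ = Ω⁻¹ and r = y − μ. -/

import Mathlib

open Matrix

/-- Multivariate t log-likelihood in the low-rank precision parametrization
`Ω = A + V·Vᵀ` with `A = diagonal a`:
`ℓ = log Γ((ν+D)/2) - log Γ(ν/2) - (D/2)·log ν - (D/2)·log π + (1/2)·log(det Ω)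
  - ((ν+D)/2)·log(1 + q/ν)` with `q = (y-μ)ᵀ Ω (y-μ)`. -/
noncomputable def tLRLL (D R : ℕ) (y μ : Fin D → ℝ) (a : Fin D → ℝ)
    (V : Matrix (Fin D) (Fin R) ℝ) (ν : ℝ) : ℝ :=
  Real.log (Real.Gamma ((ν + D) / 2)) - Real.log (Real.Gamma (ν / 2))
    - ((D : ℝ) / 2) * Real.log ν - ((D : ℝ) / 2) * Real.log Real.pi
    + (1 / 2) * Real.log (Matrix.diagonal a + V * V.transpose).det
    - ((ν + D) / 2) *
        Real.log (1 + ((y - μ) ⬝ᵥ (Matrix.diagonal a + V * V.transpose).mulVec (y - μ)) / ν)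

/-- The matrix `V` with its `(i,j)`-entry replaced by `t`. -/
def updEntryV {D R : ℕ} (V : Matrix (Fin D) (Fin R) ℝ) (i : Fin D) (j : Fin R) (t : ℝ) :
    Matrix (Fin D) (Fin R) ℝ :=
  Matrix.of fun k l => if k = i ∧ l = j then t else V k l

/-- auxiliary derivative of `s ↦ s*x + s^2*y` at `0`. -/
lemma auxDeriv1 (x y : ℝ) : HasDerivAt (fun s : ℝ => s * x + s ^ 2 * y) x 0 := by
  exact (((hasDerivAt_id (0:ℝ)).mul_const x).add ((hasDerivAt_pow 2 (0:ℝ)).mul_const y)).congr_deriv (by simp)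

set_option maxHeartbeats 1600000 in
/-- First partial derivative of the low-rank multivariate t log-likelihood with respect
to the entry `V_{ij}`: it equals `(Σ·V)_{ij} - ((ν + D)/(ν + q))·r_i·(Vᵀ·r)_j` where
`Σ = Ω⁻¹`, `r = y - μ` and `q = rᵀ Ω r`. -/
theorem tLR_deriv_V (D R : ℕ) (hD : 1 ≤ D) (y μ : Fin D → ℝ) (ν : ℝ) (hν : 0 < ν)
    (a : Fin D → ℝ) (ha : ∀ k, 0 < a k)
    (V : Matrix (Fin D) (Fin R) ℝ) (i : Fin D) (j : Fin R) :
    HasDerivAt (fun t : ℝ => tLRLL D R y μ a (updEntryV V i j t) ν)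
      (((Matrix.diagonal a + V * V.transpose)⁻¹ * V) i j
        - (ν + D) /
            (ν + (y - μ) ⬝ᵥ (Matrix.diagonal a + V * V.transpose).mulVec (y - μ)) *
            (y i - μ i) * V.transpose.mulVec (y - μ) j)
      (V i j) := by
  classical
  set v : ℝ := V i j with hv
  set r : Fin D → ℝ := y - μ with hr
  set Ω : Matrix (Fin D) (Fin D) ℝ := Matrix.diagonal a + V * V.transpose with hΩ
  set U : Matrix (Fin D) (Fin 2) ℝ :=
    Matrix.of fun (k : Fin D) (b : Fin 2) =>
      if b = 0 then (if k = i then (1:ℝ) else 0) else V k j with hU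
  set W1 : Matrix (Fin 2) (Fin D) ℝ :=
    Matrix.of fun (b : Fin 2) (l : Fin D) =>
      if b = 0 then V l j else (if l = i then (1:ℝ) else 0) with hW1
  set W2 : Matrix (Fin 2) (Fin D) ℝ :=
    Matrix.of fun (b : Fin 2) (l : Fin D) =>
      if b = 0 then (if l = i then (1:ℝ) else 0) else 0 with hW2
  -- positivity facts
  have hΩpd : Ω.PosDef := by
    refine Matrix.PosDef.add_posSemidef (Matrix.PosDef.diagonal ha) ?_
    simpa [Matrix.conjTranspose_eq_transpose_of_trivial] using
      Matrix.posSemidef_self_mul_conjTranspose V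
  have hdet : 0 < Ω.det := hΩpd.det_pos
  have hdet' : IsUnit Ω.det := hdet.ne'.isUnit
  set Sm : Matrix (Fin D) (Fin D) ℝ := Ω⁻¹ with hSm
  have hSmsymm : ∀ k l, Sm k l = Sm l k := by
    intro k l
    simpa using (hΩpd.inv).isHermitian.apply l k
  have hq0 : 0 ≤ r ⬝ᵥ Ω *ᵥ r := by simpa using hΩpd.posSemidef.dotProduct_mulVec_nonneg r
  -- key decomposition
  have key : ∀ t : ℝ,
      Matrix.diagonal a + updEntryV V i j t * (updEntryV V i j t).transpose
        = Ω + U * ((t - v) • W1 + (t - v) ^ 2 • W2) := by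
    intro t
    ext k l
    simp only [hΩ, hU, hW1, hW2, updEntryV, Matrix.add_apply, Matrix.mul_apply,
      Matrix.transpose_apply, Matrix.of_apply, Matrix.smul_apply, Pi.add_apply, smul_eq_mul,
      Fin.sum_univ_two, Fin.isValue, Fin.reduceEq, if_true, if_false, reduceIte]
    rw [add_assoc]
    congr 1
    have hterm : ∀ m : Fin R,
        (if k = i ∧ m = j then t else V k m) * (if l = i ∧ m = j then t else V l m)
        = V k m * V l m
          + (if m = j then ((if k = i then (1:ℝ) else 0) * (t - V i j) * V l m
              + V k m * (if l = i then (1:ℝ) else 0) * (t - V i j)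
              + (if k = i then (1:ℝ) else 0) * (if l = i then (1:ℝ) else 0) * (t - V i j)^2)
            else 0) := by
      intro m
      by_cases hk : k = i <;> by_cases hl : l = i <;> by_cases hm : m = j <;>
        simp [hk, hl, hm] <;> ring
    rw [Finset.sum_congr rfl (fun m _ => hterm m), Finset.sum_add_distrib,
      Finset.sum_ite_eq' Finset.univ j]
    simp only [Finset.mem_univ, if_true, hv]
    ring
  -- determinant formula
  have hdetfun : ∀ s : ℝ,
      (Ω + U * (s • W1 + s ^ 2 • W2)).det
        = Ω.det *
          ((1 + (s * (W1 * Sm * U) 0 0 + s ^ 2 * (W2 * Sm * U) 0 0))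
            * (1 + (s * (W1 * Sm * U) 1 1 + s ^ 2 * (W2 * Sm * U) 1 1))
          - (s * (W1 * Sm * U) 0 1 + s ^ 2 * (W2 * Sm * U) 0 1)
            * (s * (W1 * Sm * U) 1 0 + s ^ 2 * (W2 * Sm * U) 1 0)) := by
    intro s
    rw [Matrix.det_add_mul U (s • W1 + s ^ 2 • W2) hdet']
    congr 1
    have hWs : (s • W1 + s ^ 2 • W2) * Ω⁻¹ * U
        = s • (W1 * Sm * U) + s ^ 2 • (W2 * Sm * U) := by
      rw [Matrix.add_mul, Matrix.add_mul, Matrix.smul_mul, Matrix.smul_mul,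
        Matrix.smul_mul, Matrix.smul_mul, hSm]
    rw [hWs, Matrix.det_fin_two]
    simp only [Matrix.add_apply, Matrix.smul_apply, Matrix.one_apply, smul_eq_mul,
      Fin.isValue, Fin.reduceEq, if_true, if_false, reduceIte]
    ring
  -- quadratic-form formula
  have hqfun : ∀ s : ℝ,
      r ⬝ᵥ (Ω + U * (s • W1 + s ^ 2 • W2)) *ᵥ r
        = r ⬝ᵥ Ω *ᵥ r + 2 * s * (r i * V.transpose.mulVec r j) + s ^ 2 * r i ^ 2 := by
    intro s
    rw [Matrix.add_mulVec, dotProduct_add, add_assoc]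
    congr 1
    rw [← Matrix.mulVec_mulVec, Matrix.dotProduct_mulVec]
    have hrU : r ᵥ* U = fun b : Fin 2 => if b = 0 then r i else ∑ k, r k * V k j := by
      funext b
      fin_cases b <;>
        simp [hU, Matrix.vecMul, dotProduct, Finset.sum_ite_eq', mul_ite]
    rw [hrU]
    simp only [dotProduct, Matrix.mulVec, Matrix.add_apply, Matrix.smul_apply,
      Pi.add_apply, smul_eq_mul, Fin.sum_univ_two, Fin.isValue, Fin.reduceEq, if_true,
      if_false, reduceIte, hW1, hW2, Matrix.of_apply, Matrix.transpose_apply]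
    simp only [add_mul, zero_mul, ite_mul, one_mul, mul_assoc, Finset.sum_add_distrib,
      ← Finset.mul_sum, Finset.sum_ite_eq' Finset.univ i, Finset.mem_univ, if_true, add_zero,
      mul_zero, Finset.sum_const_zero]
    ring_nf
    rw [Finset.sum_congr rfl (fun x _ => mul_comm (V x j) (r x))]
    ring
  -- entry computations
  have hb00 : (W1 * Sm * U) 0 0 = (Sm * V) i j := by
    have h1 : (W1 * Sm * U) 0 0 = ∑ k, V k j * Sm k i := by
      simp [Matrix.mul_apply, hW1, hU, ite_mul, mul_ite, Finset.sum_ite_eq,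
        Finset.sum_ite_eq', Finset.mul_sum]
    rw [h1, Matrix.mul_apply]
    exact Finset.sum_congr rfl fun k _ => by rw [hSmsymm i k]; ring
  have hb11 : (W1 * Sm * U) 1 1 = (Sm * V) i j := by
    rw [Matrix.mul_apply]
    simp [Matrix.mul_apply, hW1, hU, ite_mul, mul_ite, Finset.sum_ite_eq,
      Finset.sum_ite_eq', Finset.mul_sum]
  -- function rewrite
  have hfun : (fun t : ℝ => tLRLL D R y μ a (updEntryV V i j t) ν)
      = fun t : ℝ =>
        (Real.log (Real.Gamma ((ν + D) / 2)) - Real.log (Real.Gamma (ν / 2))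
          - ((D : ℝ) / 2) * Real.log ν - ((D : ℝ) / 2) * Real.log Real.pi)
        + (1 / 2) * Real.log (Ω.det * ((1 + ((t - v) * (W1 * Sm * U) 0 0 + (t - v) ^ 2 * (W2 * Sm * U) 0 0)) * (1 + ((t - v) * (W1 * Sm * U) 1 1 + (t - v) ^ 2 * (W2 * Sm * U) 1 1)) - ((t - v) * (W1 * Sm * U) 0 1 + (t - v) ^ 2 * (W2 * Sm * U) 0 1) * ((t - v) * (W1 * Sm * U) 1 0 + (t - v) ^ 2 * (W2 * Sm * U) 1 0)))
        - ((ν + D) / 2) * Real.log (1 + (r ⬝ᵥ Ω *ᵥ r + 2 * (t - v) * (r i * V.transpose.mulVec r j) + (t - v) ^ 2 * r i ^ 2) / ν) := by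
    funext t
    simp only [tLRLL]
    rw [key t, hdetfun (t - v), hqfun (t - v)]
  rw [hfun]
  -- derivative pieces
  have hs : HasDerivAt (fun t : ℝ => t - v) 1 v := (hasDerivAt_id v).sub_const v
  have hP : HasDerivAt (fun s : ℝ => ((1 + (s * (W1 * Sm * U) 0 0 + s ^ 2 * (W2 * Sm * U) 0 0)) * (1 + (s * (W1 * Sm * U) 1 1 + s ^ 2 * (W2 * Sm * U) 1 1)) - (s * (W1 * Sm * U) 0 1 + s ^ 2 * (W2 * Sm * U) 0 1) * (s * (W1 * Sm * U) 1 0 + s ^ 2 * (W2 * Sm * U) 1 0)))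
      ((W1 * Sm * U) 0 0 + (W1 * Sm * U) 1 1) 0 := by
    have h := (((hasDerivAt_const (0:ℝ) (1:ℝ)).add
          (auxDeriv1 ((W1 * Sm * U) 0 0) ((W2 * Sm * U) 0 0))).mul
        ((hasDerivAt_const (0:ℝ) (1:ℝ)).add
          (auxDeriv1 ((W1 * Sm * U) 1 1) ((W2 * Sm * U) 1 1)))).sub
      ((auxDeriv1 ((W1 * Sm * U) 0 1) ((W2 * Sm * U) 0 1)).mul
        (auxDeriv1 ((W1 * Sm * U) 1 0) ((W2 * Sm * U) 1 0)))
    refine h.congr_deriv ?_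
    norm_num
  have hPt : HasDerivAt (fun t : ℝ => ((1 + ((t - v) * (W1 * Sm * U) 0 0 + (t - v) ^ 2 * (W2 * Sm * U) 0 0)) * (1 + ((t - v) * (W1 * Sm * U) 1 1 + (t - v) ^ 2 * (W2 * Sm * U) 1 1)) - ((t - v) * (W1 * Sm * U) 0 1 + (t - v) ^ 2 * (W2 * Sm * U) 0 1) * ((t - v) * (W1 * Sm * U) 1 0 + (t - v) ^ 2 * (W2 * Sm * U) 1 0)))
      ((W1 * Sm * U) 0 0 + (W1 * Sm * U) 1 1) v := by
    have h : HasDerivAt ((fun s : ℝ => ((1 + (s * (W1 * Sm * U) 0 0 + s ^ 2 * (W2 * Sm * U) 0 0)) * (1 + (s * (W1 * Sm * U) 1 1 + s ^ 2 * (W2 * Sm * U) 1 1)) - (s * (W1 * Sm * U) 0 1 + s ^ 2 * (W2 * Sm * U) 0 1) * (s * (W1 * Sm * U) 1 0 + s ^ 2 * (W2 * Sm * U) 1 0))) ∘ (fun t : ℝ => t - v)) (((W1 * Sm * U) 0 0 + (W1 * Sm * U) 1 1) * 1) v := HasDerivAt.comp v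
      (show HasDerivAt (fun s : ℝ => ((1 + (s * (W1 * Sm * U) 0 0 + s ^ 2 * (W2 * Sm * U) 0 0)) * (1 + (s * (W1 * Sm * U) 1 1 + s ^ 2 * (W2 * Sm * U) 1 1)) - (s * (W1 * Sm * U) 0 1 + s ^ 2 * (W2 * Sm * U) 0 1) * (s * (W1 * Sm * U) 1 0 + s ^ 2 * (W2 * Sm * U) 1 0))) ((W1 * Sm * U) 0 0 + (W1 * Sm * U) 1 1) (v - v) by
        rw [sub_self]; exact hP) hs
    exact h.congr_deriv (mul_one _)
  have hone : ((1 + ((v - v) * (W1 * Sm * U) 0 0 + (v - v) ^ 2 * (W2 * Sm * U) 0 0)) * (1 + ((v - v) * (W1 * Sm * U) 1 1 + (v - v) ^ 2 * (W2 * Sm * U) 1 1)) - ((v - v) * (W1 * Sm * U) 0 1 + (v - v) ^ 2 * (W2 * Sm * U) 0 1) * ((v - v) * (W1 * Sm * U) 1 0 + (v - v) ^ 2 * (W2 * Sm * U) 1 0)) = 1 := by norm_num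
  have hlog1 : HasDerivAt (fun t : ℝ => Real.log (Ω.det * ((1 + ((t - v) * (W1 * Sm * U) 0 0 + (t - v) ^ 2 * (W2 * Sm * U) 0 0)) * (1 + ((t - v) * (W1 * Sm * U) 1 1 + (t - v) ^ 2 * (W2 * Sm * U) 1 1)) - ((t - v) * (W1 * Sm * U) 0 1 + (t - v) ^ 2 * (W2 * Sm * U) 0 1) * ((t - v) * (W1 * Sm * U) 1 0 + (t - v) ^ 2 * (W2 * Sm * U) 1 0))))
      ((Ω.det * ((W1 * Sm * U) 0 0 + (W1 * Sm * U) 1 1)) / Ω.det) v := by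
    have h := (hPt.const_mul Ω.det).log (by rw [hone, mul_one]; exact hdet.ne')
    simpa [hone] using h
  have hinner : HasDerivAt
      (fun t : ℝ => r ⬝ᵥ Ω *ᵥ r + 2 * (t - v) * (r i * V.transpose.mulVec r j)
        + (t - v) ^ 2 * r i ^ 2)
      (2 * (r i * V.transpose.mulVec r j)) v := by
    have ha1 : HasDerivAt (fun t : ℝ => 2 * (t - v)) 2 v := by simpa using hs.const_mul 2
    have h := ((hasDerivAt_const v (r ⬝ᵥ Ω *ᵥ r)).add
        (ha1.mul_const (r i * V.transpose.mulVec r j))).add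
      ((hs.pow 2).mul_const (r i ^ 2))
    refine h.congr_deriv ?_
    norm_num
  have h2 : HasDerivAt (fun t : ℝ => (1 + (r ⬝ᵥ Ω *ᵥ r + 2 * (t - v) * (r i * V.transpose.mulVec r j) + (t - v) ^ 2 * r i ^ 2) / ν))
      (2 * (r i * V.transpose.mulVec r j) / ν) v :=
    (hinner.div_const ν).const_add 1
  have hqv : (1 + (r ⬝ᵥ Ω *ᵥ r + 2 * (v - v) * (r i * V.transpose.mulVec r j) + (v - v) ^ 2 * r i ^ 2) / ν) = 1 + (r ⬝ᵥ Ω *ᵥ r) / ν := by norm_num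
  have hpos2 : (0:ℝ) < 1 + (r ⬝ᵥ Ω *ᵥ r) / ν := by positivity
  have hlog2 : HasDerivAt (fun t : ℝ => Real.log (1 + (r ⬝ᵥ Ω *ᵥ r + 2 * (t - v) * (r i * V.transpose.mulVec r j) + (t - v) ^ 2 * r i ^ 2) / ν))
      ((2 * (r i * V.transpose.mulVec r j) / ν) / (1 + (r ⬝ᵥ Ω *ᵥ r) / ν)) v := by
    have h := h2.log (by rw [hqv]; exact hpos2.ne')
    simpa [hqv] using h
  have total := ((hlog1.const_mul ((1:ℝ)/2)).const_add
      (Real.log (Real.Gamma ((ν + D) / 2)) - Real.log (Real.Gamma (ν / 2))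
        - ((D : ℝ) / 2) * Real.log ν - ((D : ℝ) / 2) * Real.log Real.pi)).sub
    (hlog2.const_mul ((ν + D) / 2))
  refine total.congr_deriv ?_
  have hq0' : (0:ℝ) < ν + r ⬝ᵥ Ω *ᵥ r := by linarith
  rw [hb00, hb11]
  simp only [← Pi.sub_apply y μ, ← hr]
  field_simp
  ring
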